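/- In the real Heisenberg group H_3(ℝ) with coordinates (x,y,z) and group law (x,y,z)·(x',y',z') = (x+x', y+y', z+z'+ (xy'-yx')/2), the subFinsler distance d_3 from the identity, associated to the ℓ¹ norm |x|+|y| on the horizontal plane, satisfies d_3(id,(x,y,z)) = |x|+|y| whenever |z| ≤ |xy|/2. -/

import Mathlib

/-- The subFinsler (Carnot–Carathéodory) distance from the identity in the
Heisenberg group `H₃(ℝ)`, in exponential coordinates `(x,y,z)` with `[X,Y] = Z`,
associated to the ℓ¹ norm `|a| + |b|` on horizontal vectors `aX + bY`.
A horizontal path is encoded by coordinate functions `x y z : ℝ → ℝ` with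
controls `u v` (the horizontal velocities), the constraint on `z` being
`z' = (x v - y u)/2`, and its length is `∫ (|u| + |v|)`. -/
noncomputable def d3 : ℝ × ℝ × ℝ → ℝ := fun p =>
  sInf { L : ℝ | ∃ x y z u v : ℝ → ℝ,
    x 0 = 0 ∧ y 0 = 0 ∧ z 0 = 0 ∧
    x 1 = p.1 ∧ y 1 = p.2.1 ∧ z 1 = p.2.2 ∧
    ContinuousOn u (Set.Icc 0 1) ∧ ContinuousOn v (Set.Icc 0 1) ∧
    (∀ t ∈ Set.Icc (0:ℝ) 1, HasDerivAt x (u t) t ∧ HasDerivAt y (v t) t ∧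
        HasDerivAt z ((x t * v t - y t * u t) / 2) t) ∧
    L = ∫ t in (0:ℝ)..1, (|u t| + |v t|) }

/-- Group law of `H₃(ℝ)` in exponential coordinates:
`(x,y,z)·(x',y',z') = (x+x', y+y', z+z'+(xy'-yx')/2)`. -/
noncomputable def hMul (p q : ℝ × ℝ × ℝ) : ℝ × ℝ × ℝ :=
  (p.1 + q.1, p.2.1 + q.2.1, p.2.2 + q.2.2 + (p.1 * q.2.1 - p.2.1 * q.1) / 2)

/-- Inverse in `H₃(ℝ)` in exponential coordinates. -/
noncomputable def hInv (p : ℝ × ℝ × ℝ) : ℝ × ℝ × ℝ := (-p.1, -p.2.1, -p.2.2)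

/-- The left-invariant subFinsler distance `d₃` on `H₃(ℝ)`. -/
noncomputable def d3dist (p q : ℝ × ℝ × ℝ) : ℝ := d3 (hMul (hInv p) q)

/-- clamp to [0,1] -/
noncomputable def stc (t : ℝ) : ℝ := max 0 (min t 1)
/-- C¹ smoothstep -/
noncomputable def sg (t : ℝ) : ℝ := (stc t)^2 * (3 - 2 * stc t)
/-- its derivative -/
noncomputable def sg' (t : ℝ) : ℝ := 6 * stc t * (1 - stc t)

lemma stc_of_nonpos {t : ℝ} (h : t ≤ 0) : stc t = 0 := by
  unfold stc; rw [max_eq_left]; exact le_trans (min_le_left _ _) h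
lemma stc_of_one_le {t : ℝ} (h : 1 ≤ t) : stc t = 1 := by
  unfold stc; rw [min_eq_right h, max_eq_right zero_le_one]
lemma stc_of_mem {t : ℝ} (h0 : 0 ≤ t) (h1 : t ≤ 1) : stc t = t := by
  unfold stc; rw [min_eq_left h1, max_eq_right h0]
lemma stc_nonneg (t : ℝ) : 0 ≤ stc t := le_max_left _ _
lemma stc_le_one (t : ℝ) : stc t ≤ 1 := max_le zero_le_one (min_le_right _ _)

lemma sg_of_nonpos {t : ℝ} (h : t ≤ 0) : sg t = 0 := by
  unfold sg; rw [stc_of_nonpos h]; ring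
lemma sg_of_one_le {t : ℝ} (h : 1 ≤ t) : sg t = 1 := by
  unfold sg; rw [stc_of_one_le h]; ring
lemma sg'_of_nonpos {t : ℝ} (h : t ≤ 0) : sg' t = 0 := by
  unfold sg'; rw [stc_of_nonpos h]; ring
lemma sg'_of_one_le {t : ℝ} (h : 1 ≤ t) : sg' t = 0 := by
  unfold sg'; rw [stc_of_one_le h]; ring
lemma sg'_nonneg (t : ℝ) : 0 ≤ sg' t := by
  have h0 := stc_nonneg t; have h1 := stc_le_one t
  unfold sg'; nlinarith

lemma stc_continuous : Continuous stc :=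
  continuous_const.max (continuous_id.min continuous_const)
lemma sg'_continuous : Continuous sg' :=
  (continuous_const.mul stc_continuous).mul (continuous_const.sub stc_continuous)

lemma sg_abs_le0 (s : ℝ) : |sg s| ≤ 3 * s ^ 2 := by
  rcases le_or_gt s 0 with hs | hs
  · rw [sg_of_nonpos hs]; simp; positivity
  rcases le_or_gt 1 s with h1 | h1
  · rw [sg_of_one_le h1, abs_one]; nlinarith
  · unfold sg; rw [stc_of_mem hs.le h1.le, abs_of_nonneg (by nlinarith)]; nlinarith

lemma sg_abs_le1 (s : ℝ) : |sg s - 1| ≤ 3 * (s - 1) ^ 2 := by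
  rcases le_or_gt 1 s with h1 | h1
  · rw [sg_of_one_le h1]; simp; positivity
  rcases le_or_gt s 0 with hs | hs
  · rw [sg_of_nonpos hs]; rw [abs_of_nonpos (by norm_num)]; nlinarith
  · have key : (0:ℝ) ≤ (1 - s) ^ 2 * (1 + 2 * s) :=
      mul_nonneg (sq_nonneg _) (by linarith)
    unfold sg; rw [stc_of_mem hs.le h1.le, abs_of_nonpos (by nlinarith)]; nlinarith

lemma sq_isLittleO (a : ℝ) : (fun s : ℝ => (s - a) ^ 2) =o[nhds a] (fun s => s - a) := by
  rw [Asymptotics.isLittleO_iff]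
  intro c hc
  filter_upwards [Metric.ball_mem_nhds a hc] with s hs
  rw [Metric.mem_ball, Real.dist_eq] at hs
  rw [Real.norm_eq_abs, Real.norm_eq_abs, abs_pow, sq]
  exact mul_le_mul_of_nonneg_right hs.le (abs_nonneg _)

lemma sg_hasDerivAt (t : ℝ) : HasDerivAt sg (sg' t) t := by
  rcases lt_trichotomy t 0 with ht | ht | ht
  · rw [sg'_of_nonpos ht.le]
    apply (hasDerivAt_const t (0:ℝ)).congr_of_eventuallyEq
    filter_upwards [Iio_mem_nhds ht] with s hs
    exact sg_of_nonpos (le_of_lt hs)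
  · subst ht
    rw [sg'_of_nonpos le_rfl, hasDerivAt_iff_isLittleO]
    simp only [sub_zero, smul_zero, sg_of_nonpos le_rfl]
    have hO : (fun s : ℝ => sg s) =O[nhds 0] (fun s => s ^ 2) := by
      apply Asymptotics.IsBigO.of_bound 3
      filter_upwards with s
      rw [Real.norm_eq_abs, Real.norm_eq_abs, abs_pow]
      calc |sg s| ≤ 3 * s ^ 2 := sg_abs_le0 s
        _ = 3 * |s| ^ 2 := by rw [sq_abs]
    exact hO.trans_isLittleO (by simpa using sq_isLittleO 0)
  rcases lt_trichotomy t 1 with ht1 | ht1 | ht1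
  · have hd : HasDerivAt (fun s : ℝ => s ^ 2 * (3 - 2 * s)) (sg' t) t := by
      have : HasDerivAt (fun s : ℝ => s ^ 2 * (3 - 2 * s))
          (2 * t ^ 1 * (3 - 2 * t) + t ^ 2 * (0 - 2 * 1)) t := by
        exact (hasDerivAt_pow 2 t).mul (((hasDerivAt_const t (3:ℝ)).sub ((hasDerivAt_id t).const_mul 2)))
      convert this using 1
      unfold sg'; rw [stc_of_mem ht.le ht1.le]; ring
    apply hd.congr_of_eventuallyEq
    filter_upwards [Ioo_mem_nhds ht ht1] with s hs
    unfold sg; rw [stc_of_mem hs.1.le hs.2.le]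
  · subst ht1
    rw [sg'_of_one_le le_rfl, hasDerivAt_iff_isLittleO]
    simp only [smul_zero, sg_of_one_le le_rfl, sub_zero]
    have hO : (fun s : ℝ => sg s - 1) =O[nhds 1] (fun s => (s - 1) ^ 2) := by
      apply Asymptotics.IsBigO.of_bound 3
      filter_upwards with s
      rw [Real.norm_eq_abs, Real.norm_eq_abs, abs_pow]
      calc |sg s - 1| ≤ 3 * (s - 1) ^ 2 := sg_abs_le1 s
        _ = 3 * |s - 1| ^ 2 := by rw [sq_abs]
    exact hO.trans_isLittleO (sq_isLittleO 1)
  · rw [sg'_of_one_le ht1.le]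
    apply (hasDerivAt_const t (1:ℝ)).congr_of_eventuallyEq
    filter_upwards [Ioi_mem_nhds ht1] with s hs
    exact sg_of_one_le (le_of_lt hs)

lemma affine_hasDerivAt (c t : ℝ) :
    HasDerivAt (fun t : ℝ => sg (3 * t - c)) (sg' (3 * t - c) * 3) t := by
  have hin : HasDerivAt (fun t : ℝ => 3 * t - c) 3 t := by
    simpa using ((hasDerivAt_id t).const_mul 3).sub_const c
  exact (sg_hasDerivAt (3 * t - c)).comp t hin

lemma affine_cont (c : ℝ) : Continuous (fun t : ℝ => sg' (3 * t - c) * 3) :=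
  (sg'_continuous.comp ((continuous_const.mul continuous_id).sub continuous_const)).mul
    continuous_const

lemma integ3 (c : ℝ) (h0 : 0 ≤ c) (h2 : c ≤ 2) :
    ∫ t in (0:ℝ)..1, sg' (3 * t - c) * 3 = 1 := by
  have := intervalIntegral.integral_eq_sub_of_hasDerivAt
    (f := fun t : ℝ => sg (3 * t - c)) (f' := fun t => sg' (3 * t - c) * 3)
    (fun t _ => affine_hasDerivAt c t) ((affine_cont c).intervalIntegrable 0 1)
  rw [this]
  norm_num
  rw [sg_of_one_le (by linarith), sg_of_nonpos (by linarith)]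
  ring

lemma s_mul_sp (r s : ℝ) (h : r + 1 ≤ s) : sg s * sg' r = sg' r := by
  rcases le_or_gt r 0 with hr | hr
  · rw [sg'_of_nonpos hr]; ring
  rcases le_or_gt 1 r with hr1 | hr1
  · rw [sg'_of_one_le hr1]; ring
  · rw [sg_of_one_le (by linarith)]; ring

lemma s_mul_sp_zero (r s : ℝ) (h : s + 1 ≤ r) : sg s * sg' r = 0 := by
  rcases le_or_gt 1 r with hr1 | hr1
  · rw [sg'_of_one_le hr1]; ring
  · rw [sg_of_nonpos (by linarith)]; ring

/-- In the region `|z| ≤ |xy|/2`, the subFinsler distance from the identity in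
the Heisenberg group for the ℓ¹ horizontal norm is `|x| + |y|`. -/
theorem d3_eq_of_staircase (x y z : ℝ) (h : |z| ≤ |x * y| / 2) :
    d3 (x, y, z) = |x| + |y| := by
  have hd3 : d3 (x, y, z) = sInf {L : ℝ | ∃ f g w u v : ℝ → ℝ,
      f 0 = 0 ∧ g 0 = 0 ∧ w 0 = 0 ∧
      f 1 = x ∧ g 1 = y ∧ w 1 = z ∧
      ContinuousOn u (Set.Icc 0 1) ∧ ContinuousOn v (Set.Icc 0 1) ∧
      (∀ t ∈ Set.Icc (0:ℝ) 1, HasDerivAt f (u t) t ∧ HasDerivAt g (v t) t ∧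
          HasDerivAt w ((f t * v t - g t * u t) / 2) t) ∧
      L = ∫ t in (0:ℝ)..1, (|u t| + |v t|)} := rfl
  rw [hd3]
  set S := {L : ℝ | ∃ f g w u v : ℝ → ℝ,
      f 0 = 0 ∧ g 0 = 0 ∧ w 0 = 0 ∧
      f 1 = x ∧ g 1 = y ∧ w 1 = z ∧
      ContinuousOn u (Set.Icc 0 1) ∧ ContinuousOn v (Set.Icc 0 1) ∧
      (∀ t ∈ Set.Icc (0:ℝ) 1, HasDerivAt f (u t) t ∧ HasDerivAt g (v t) t ∧
          HasDerivAt w ((f t * v t - g t * u t) / 2) t) ∧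
      L = ∫ t in (0:ℝ)..1, (|u t| + |v t|)} with hS
  -- lower bound
  have lb : (|x| + |y|) ∈ lowerBounds S := by
    rintro L ⟨f, g, w, u, v, hf0, hg0, hw0, hf1, hg1, hw1, hu, hv, hderiv, rfl⟩
    have huIcc : ContinuousOn u (Set.uIcc 0 1) := by rwa [Set.uIcc_of_le zero_le_one]
    have hvIcc : ContinuousOn v (Set.uIcc 0 1) := by rwa [Set.uIcc_of_le zero_le_one]
    have hui : IntervalIntegrable u MeasureTheory.volume 0 1 := huIcc.intervalIntegrable
    have hvi : IntervalIntegrable v MeasureTheory.volume 0 1 := hvIcc.intervalIntegrable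
    have hix : ∫ t in (0:ℝ)..1, u t = x := by
      have := intervalIntegral.integral_eq_sub_of_hasDerivAt (f := f) (f' := u)
        (fun t ht => (hderiv t (by rwa [Set.uIcc_of_le zero_le_one] at ht)).1) hui
      rw [this, hf1, hf0, sub_zero]
    have hiy : ∫ t in (0:ℝ)..1, v t = y := by
      have := intervalIntegral.integral_eq_sub_of_hasDerivAt (f := g) (f' := v)
        (fun t ht => (hderiv t (by rwa [Set.uIcc_of_le zero_le_one] at ht)).2.1) hvi
      rw [this, hg1, hg0, sub_zero]
    calc |x| + |y| = |∫ t in (0:ℝ)..1, u t| + |∫ t in (0:ℝ)..1, v t| := by rw [hix, hiy]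
      _ ≤ (∫ t in (0:ℝ)..1, |u t|) + ∫ t in (0:ℝ)..1, |v t| :=
          add_le_add (intervalIntegral.abs_integral_le_integral_abs zero_le_one)
            (intervalIntegral.abs_integral_le_integral_abs zero_le_one)
      _ = ∫ t in (0:ℝ)..1, (|u t| + |v t|) :=
          (intervalIntegral.integral_add hui.abs hvi.abs).symm
  -- the switch point
  obtain ⟨a, ha⟩ : ∃ a : ℝ, a = x / 2 + (if y = 0 then 0 else z / y) := ⟨_, rfl⟩
  have hdd : |a - x / 2| ≤ |x| / 2 := by
    by_cases hy : y = 0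
    · rw [ha]; simp [hy]; positivity
    · rw [ha]
      have h2 : x / 2 + z / y - x / 2 = z / y := by ring
      rw [if_neg hy, h2, abs_div, div_le_iff₀ (abs_pos.2 hy)]
      rw [abs_mul] at h
      nlinarith [abs_nonneg y]
  have hprod : 0 ≤ a * (x - a) := by
    have h2 : |a - x/2| * |a - x/2| ≤ (|x|/2) * (|x|/2) :=
      mul_self_le_mul_self (abs_nonneg _) hdd
    nlinarith [h2, abs_mul_abs_self (a - x/2), abs_mul_abs_self x]
  have habs : |a| + |x - a| = |x| := by
    rcases abs_cases a with ⟨h1, h1'⟩ | ⟨h1, h1'⟩ <;>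
      rcases abs_cases (x - a) with ⟨h2, h2'⟩ | ⟨h2, h2'⟩ <;>
      rcases abs_cases x with ⟨h3, h3'⟩ | ⟨h3, h3'⟩ <;> nlinarith
  have hzval : (a * y - y * (x - a)) / 2 = z := by
    by_cases hy : y = 0
    · have hz0 : z = 0 := by
        have h0 : |z| ≤ 0 := by simpa [hy] using h
        exact abs_eq_zero.mp (le_antisymm h0 (abs_nonneg z))
      rw [hy, hz0]; ring
    · rw [ha, if_neg hy]; field_simp; ring
  -- membership
  have mem : (|x| + |y|) ∈ S := by
    rw [hS]
    refine ⟨fun t => a * sg (3*t - 0) + (x - a) * sg (3*t - 2),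
           fun t => y * sg (3*t - 1),
           fun t => (a * y * sg (3*t - 1) - y * (x - a) * sg (3*t - 2)) / 2,
           fun t => a * (sg' (3*t - 0) * 3) + (x - a) * (sg' (3*t - 2) * 3),
           fun t => y * (sg' (3*t - 1) * 3),
           ?_, ?_, ?_, ?_, ?_, ?_, ?_, ?_, ?_, ?_⟩
    · show a * sg (3*0 - 0) + (x - a) * sg (3*0 - 2) = 0
      rw [sg_of_nonpos (show (3*0 - 0 : ℝ) ≤ 0 by norm_num),
        sg_of_nonpos (show (3*0 - 2 : ℝ) ≤ 0 by norm_num)]; ring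
    · show y * sg (3*0 - 1) = 0
      rw [sg_of_nonpos (show (3*0 - 1 : ℝ) ≤ 0 by norm_num)]; ring
    · show (a * y * sg (3*0 - 1) - y * (x - a) * sg (3*0 - 2)) / 2 = 0
      rw [sg_of_nonpos (show (3*0 - 1 : ℝ) ≤ 0 by norm_num),
        sg_of_nonpos (show (3*0 - 2 : ℝ) ≤ 0 by norm_num)]; ring
    · show a * sg (3*1 - 0) + (x - a) * sg (3*1 - 2) = x
      rw [sg_of_one_le (show (1:ℝ) ≤ 3*1 - 0 by norm_num),
        sg_of_one_le (show (1:ℝ) ≤ 3*1 - 2 by norm_num)]; ring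
    · show y * sg (3*1 - 1) = y
      rw [sg_of_one_le (show (1:ℝ) ≤ 3*1 - 1 by norm_num)]; ring
    · show (a * y * sg (3*1 - 1) - y * (x - a) * sg (3*1 - 2)) / 2 = z
      rw [sg_of_one_le (show (1:ℝ) ≤ 3*1 - 1 by norm_num),
        sg_of_one_le (show (1:ℝ) ≤ 3*1 - 2 by norm_num)]
      rw [← hzval]; ring
    · exact ((continuous_const.mul (affine_cont 0)).add
        (continuous_const.mul (affine_cont 2))).continuousOn
    · exact (continuous_const.mul (affine_cont 1)).continuousOn
    · intro t _
      refine ⟨((affine_hasDerivAt 0 t).const_mul a).add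
          ((affine_hasDerivAt 2 t).const_mul (x - a)),
        (affine_hasDerivAt 1 t).const_mul y, ?_⟩
      have hZ := (((affine_hasDerivAt 1 t).const_mul (a*y)).sub
        ((affine_hasDerivAt 2 t).const_mul (y*(x-a)))).div_const 2
      have e1 : sg (3*t - 0) * sg' (3*t - 1) = sg' (3*t - 1) := s_mul_sp _ _ (by linarith)
      have e2 : sg (3*t - 2) * sg' (3*t - 1) = 0 := s_mul_sp_zero _ _ (by linarith)
      have e3 : sg (3*t - 1) * sg' (3*t - 0) = 0 := s_mul_sp_zero _ _ (by linarith)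
      have e4 : sg (3*t - 1) * sg' (3*t - 2) = sg' (3*t - 2) := s_mul_sp _ _ (by linarith)
      refine hZ.congr_deriv (Eq.symm ?_)
      linear_combination (3*a*y/2)*e1 + (3*(x-a)*y/2)*e2 - (3*a*y/2)*e3 - (3*(x-a)*y/2)*e4
    · have hUabs : ∀ t : ℝ,
          |a * (sg' (3*t - 0) * 3) + (x - a) * (sg' (3*t - 2) * 3)|
            = |a| * (sg' (3*t - 0) * 3) + |x - a| * (sg' (3*t - 2) * 3) := by
        intro t
        rcases le_or_gt (3*t - 0) 1 with hc | hc
        · rw [sg'_of_nonpos (show 3*t - 2 ≤ 0 by linarith)]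
          simp only [zero_mul, mul_zero, add_zero]
          rw [abs_mul, abs_of_nonneg (mul_nonneg (sg'_nonneg _) (by norm_num))]
        · rw [sg'_of_one_le (show (1:ℝ) ≤ 3*t - 0 by linarith)]
          simp only [zero_mul, mul_zero, zero_add]
          rw [abs_mul, abs_of_nonneg (mul_nonneg (sg'_nonneg _) (by norm_num))]
      have hVabs : ∀ t : ℝ, |y * (sg' (3*t - 1) * 3)| = |y| * (sg' (3*t - 1) * 3) := by
        intro t
        rw [abs_mul, abs_of_nonneg (mul_nonneg (sg'_nonneg _) (by norm_num))]
      have hiA : IntervalIntegrable (fun t => |a| * (sg' (3*t - 0) * 3))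
          MeasureTheory.volume 0 1 := (continuous_const.mul (affine_cont 0)).intervalIntegrable 0 1
      have hiB : IntervalIntegrable (fun t => |x - a| * (sg' (3*t - 2) * 3))
          MeasureTheory.volume 0 1 := (continuous_const.mul (affine_cont 2)).intervalIntegrable 0 1
      have hiC : IntervalIntegrable (fun t => |y| * (sg' (3*t - 1) * 3))
          MeasureTheory.volume 0 1 := (continuous_const.mul (affine_cont 1)).intervalIntegrable 0 1
      have key : (∫ t in (0:ℝ)..1,
          (|a * (sg' (3*t - 0) * 3) + (x - a) * (sg' (3*t - 2) * 3)|
            + |y * (sg' (3*t - 1) * 3)|))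
          = (|a| + |x - a|) + |y| := by
        calc (∫ t in (0:ℝ)..1,
            (|a * (sg' (3*t - 0) * 3) + (x - a) * (sg' (3*t - 2) * 3)|
              + |y * (sg' (3*t - 1) * 3)|))
            = ∫ t in (0:ℝ)..1,
              ((|a| * (sg' (3*t - 0) * 3) + |x - a| * (sg' (3*t - 2) * 3))
                + |y| * (sg' (3*t - 1) * 3)) :=
              intervalIntegral.integral_congr (fun t _ => by rw [hUabs t, hVabs t])
          _ = ((∫ t in (0:ℝ)..1, |a| * (sg' (3*t - 0) * 3))
                + ∫ t in (0:ℝ)..1, |x - a| * (sg' (3*t - 2) * 3))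
                + ∫ t in (0:ℝ)..1, |y| * (sg' (3*t - 1) * 3) := by
              rw [intervalIntegral.integral_add (hiA.add hiB) hiC,
                intervalIntegral.integral_add hiA hiB]
          _ = (|a| * 1 + |x - a| * 1) + |y| * 1 := by
              rw [intervalIntegral.integral_const_mul, intervalIntegral.integral_const_mul,
                intervalIntegral.integral_const_mul,
                integ3 0 le_rfl (by norm_num), integ3 2 (by norm_num) le_rfl,
                integ3 1 (by norm_num) (by norm_num)]
          _ = (|a| + |x - a|) + |y| := by ring
      show |x| + |y| = ∫ t in (0:ℝ)..1,
        (|a * (sg' (3*t - 0) * 3) + (x - a) * (sg' (3*t - 2) * 3)|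
          + |y * (sg' (3*t - 1) * 3)|)
      rw [key, habs]
  exact le_antisymm (csInf_le ⟨|x| + |y|, lb⟩ mem) (le_csInf ⟨|x| + |y|, mem⟩ lb)
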